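/- Let ι be a nonempty finite index set, A : Matrix ι ι ℝ a matrix whose kernel (of v ↦ A.mulVec v) is exactly the ℝ-span of the all-ones vector 1, C : ι → ℝ with S := Σ_{i∈ι} C i ≠ 0, and G : Matrix κ ι ℝ with G.mulVec 1 = 0. Let J be a finite set of wells with sources q_j : ι → ℝ, total rates s_j := Σ_{i∈ι} q_j i, and pseudo-steady-state solutions p_j satisfying A.mulVec p_j = −q_j + (s_j/S) • C. Suppose c : J → ℝ satisfies Σ_{j∈J} c j * s_j = 0, and p_ss : ι → ℝ is any steady-state solution satisfying A.mulVec p_ss = −Σ_{j∈J} c j • q_j. Then G.mulVec (Σ_{j∈J} c j • p_j) = G.mulVec p_ss. (The velocity field obtained by superposing single-well pseudo-steady-state velocity responses equals the velocity field of the directly simulated steady state.) -/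
import Mathlib


/-- The velocity field obtained by superposing single-well pseudo-steady-state
velocity responses equals the velocity field of the directly simulated steady
state, under the balanced-rate condition VRR = 1. -/
theorem superposed_velocity_eq_steady_state_velocity
    {ι κ J : Type*} [Fintype ι] [Nonempty ι] [Fintype κ] [Fintype J]
    (A : Matrix ι ι ℝ)
    (hker : LinearMap.ker A.mulVecLin = Submodule.span ℝ {(1 : ι → ℝ)})
    (C : ι → ℝ) (hS : ∑ i, C i ≠ 0)
    (G : Matrix κ ι ℝ) (hG : G.mulVec (1 : ι → ℝ) = 0)
    (q : J → ι → ℝ) (p : J → ι → ℝ)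
    (hpss : ∀ j, A.mulVec (p j) = -q j + ((∑ i, q j i) / (∑ i, C i)) • C)
    (c : J → ℝ) (hc : ∑ j, c j * (∑ i, q j i) = 0)
    (p_ss : ι → ℝ) (hss : A.mulVec p_ss = -(∑ j, c j • q j)) :
    G.mulVec (∑ j, c j • p j) = G.mulVec p_ss := by
  have hA : A.mulVec (∑ j, c j • p j) = A.mulVec p_ss := by
    have h1 : A.mulVec (∑ j, c j • p j) = ∑ j, c j • A.mulVec (p j) := by
      rw [show A.mulVec (∑ j, c j • p j) = A.mulVecLin (∑ j, c j • p j) from rfl,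
        map_sum]
      simp [Matrix.mulVecLin]
    rw [h1, hss]
    simp only [hpss, smul_add]
    rw [Finset.sum_add_distrib]
    have h2 : ∑ j, c j • (((∑ i, q j i) / (∑ i, C i)) • C) = 0 := by
      simp only [smul_smul]
      rw [← Finset.sum_smul]
      have : (∑ j, c j * ((∑ i, q j i) / (∑ i, C i))) = 0 := by
        simp only [mul_div_assoc']
        rw [← Finset.sum_div, hc, zero_div]
      · rw [this, zero_smul]
    rw [h2, add_zero, ← Finset.sum_neg_distrib]
    congr 1; ext j; rw [smul_neg]
  have hkerv : (∑ j, c j • p j) - p_ss ∈ LinearMap.ker A.mulVecLin := by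
    rw [LinearMap.mem_ker, map_sub]
    show A.mulVec _ - A.mulVec _ = 0
    rw [hA, sub_self]
  rw [hker, Submodule.mem_span_singleton] at hkerv
  obtain ⟨a, ha⟩ := hkerv
  have h3 : (∑ j, c j • p j) = p_ss + a • (1 : ι → ℝ) := by
    rw [eq_add_of_sub_eq ha.symm]; abel
  rw [h3, Matrix.mulVec_add, Matrix.mulVec_smul, hG, smul_zero, add_zero]
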